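/- Let A be a commutative k-algebra and let u: A[[t]] → A[[t]] be a k[[t]]-linear map restricting to a map of the form u(a) = a + Σ_{i≥1} u_i(a)t^i on A. If u satisfies the d-sphere product condition for d = n and for d = m (as in equation (8) of the paper: for odd d, u(a₁a₂)⋯u(a_d a_{d+1}) = u(a₁)u(a₂a₃)⋯u(a_{d−1}a_d)u(a_{d+1}), and for even d the analogous identity with sides swapped), then u satisfies the d-sphere product condition for d = n + m. -/

import Mathlib

open Finset

/-- The `d`-sphere product condition (equation (8) of the paper) for a map `u : A → R`
into a commutative multiplicative target: for odd `d`,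
`u(a₁a₂)⋯u(a_d a_{d+1}) = u(a₁)u(a₂a₃)⋯u(a_{d−1}a_d)u(a_{d+1})`, and for even `d` the
analogous identity with sides swapped. -/
def SphereCond {A R : Type*} [CommMonoid A] [CommMonoid R] (d : ℕ) (u : A → R) : Prop :=
  (Odd d → ∀ a : ℕ → A,
      (∏ i ∈ range ((d + 1) / 2), u (a (2 * i + 1) * a (2 * i + 2)))
        = u (a 1) * (∏ i ∈ range ((d - 1) / 2), u (a (2 * i + 2) * a (2 * i + 3)))
            * u (a (d + 1))) ∧
  (Even d → ∀ a : ℕ → A,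
      (∏ i ∈ range (d / 2), u (a (2 * i + 1) * a (2 * i + 2))) * u (a (d + 1))
        = u (a 1) * ∏ i ∈ range (d / 2), u (a (2 * i + 2) * a (2 * i + 3)))

lemma key_even {A R : Type*} [CommMonoid A] [CommMonoid R] (u : A → R) (n m : ℕ)
    (hn : Even n) (hcn : SphereCond n u) (hcm : SphereCond m u) :
    SphereCond (n + m) u := by
  obtain ⟨p, rfl⟩ : ∃ p, n = 2 * p := by obtain ⟨r, hr⟩ := hn; exact ⟨r, by omega⟩
  have hA := hcn.2 ⟨p, by ring⟩
  rw [show 2 * p / 2 = p from by omega] at hA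
  rcases Nat.even_or_odd m with hme | hmo
  · obtain ⟨q, rfl⟩ : ∃ q, m = 2 * q := by obtain ⟨r, hr⟩ := hme; exact ⟨r, by omega⟩
    refine ⟨fun h => False.elim (by rw [Nat.odd_iff] at h; omega), fun _ a => ?_⟩
    have hB := hcm.2 ⟨q, by ring⟩ (fun j => a (j + 2 * p))
    rw [show 2 * q / 2 = q from by omega] at hB
    rw [show (2 * p + 2 * q) / 2 = p + q from by omega]
    have e1 : ∏ i ∈ range q, u (a (2 * (p + i) + 1) * a (2 * (p + i) + 2))
        = ∏ i ∈ range q, u (a (2 * i + 1 + 2 * p) * a (2 * i + 2 + 2 * p)) :=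
      prod_congr rfl fun i _ => by
        rw [show 2 * (p + i) + 1 = 2 * i + 1 + 2 * p from by ring,
          show 2 * (p + i) + 2 = 2 * i + 2 + 2 * p from by ring]
    have e2 : ∏ i ∈ range q, u (a (2 * (p + i) + 2) * a (2 * (p + i) + 3))
        = ∏ i ∈ range q, u (a (2 * i + 2 + 2 * p) * a (2 * i + 3 + 2 * p)) :=
      prod_congr rfl fun i _ => by
        rw [show 2 * (p + i) + 2 = 2 * i + 2 + 2 * p from by ring,
          show 2 * (p + i) + 3 = 2 * i + 3 + 2 * p from by ring]
    calc (∏ i ∈ range (p + q), u (a (2 * i + 1) * a (2 * i + 2))) * u (a (2 * p + 2 * q + 1))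
        = (∏ i ∈ range p, u (a (2 * i + 1) * a (2 * i + 2))) *
            ((∏ i ∈ range q, u (a (2 * i + 1 + 2 * p) * a (2 * i + 2 + 2 * p))) *
              u (a (2 * q + 1 + 2 * p))) := by
          rw [prod_range_add, e1, show 2 * p + 2 * q + 1 = 2 * q + 1 + 2 * p from by ring,
            mul_assoc]
      _ = ((∏ i ∈ range p, u (a (2 * i + 1) * a (2 * i + 2))) * u (a (2 * p + 1))) *
            (∏ i ∈ range q, u (a (2 * i + 2 + 2 * p) * a (2 * i + 3 + 2 * p))) := by
          rw [hB, show (1 : ℕ) + 2 * p = 2 * p + 1 from by ring, mul_assoc]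
      _ = (u (a 1) * ∏ i ∈ range p, u (a (2 * i + 2) * a (2 * i + 3))) *
            (∏ i ∈ range q, u (a (2 * i + 2 + 2 * p) * a (2 * i + 3 + 2 * p))) := by
          rw [hA a]
      _ = u (a 1) * ∏ i ∈ range (p + q), u (a (2 * i + 2) * a (2 * i + 3)) := by
          rw [prod_range_add, e2, mul_assoc]
  · obtain ⟨q, rfl⟩ : ∃ q, m = 2 * q + 1 := by obtain ⟨r, hr⟩ := hmo; exact ⟨r, by omega⟩
    refine ⟨fun _ a => ?_, fun h => False.elim (by rw [Nat.even_iff] at h; omega)⟩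
    have hB := hcm.1 ⟨q, by ring⟩ (fun j => a (j + 2 * p))
    rw [show (2 * q + 1 + 1) / 2 = q + 1 from by omega,
      show (2 * q + 1 - 1) / 2 = q from by omega] at hB
    rw [show (2 * p + (2 * q + 1) + 1) / 2 = p + (q + 1) from by omega,
      show (2 * p + (2 * q + 1) - 1) / 2 = p + q from by omega]
    have e1 : ∏ i ∈ range (q + 1), u (a (2 * (p + i) + 1) * a (2 * (p + i) + 2))
        = ∏ i ∈ range (q + 1), u (a (2 * i + 1 + 2 * p) * a (2 * i + 2 + 2 * p)) :=
      prod_congr rfl fun i _ => by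
        rw [show 2 * (p + i) + 1 = 2 * i + 1 + 2 * p from by ring,
          show 2 * (p + i) + 2 = 2 * i + 2 + 2 * p from by ring]
    have e2 : ∏ i ∈ range q, u (a (2 * (p + i) + 2) * a (2 * (p + i) + 3))
        = ∏ i ∈ range q, u (a (2 * i + 2 + 2 * p) * a (2 * i + 3 + 2 * p)) :=
      prod_congr rfl fun i _ => by
        rw [show 2 * (p + i) + 2 = 2 * i + 2 + 2 * p from by ring,
          show 2 * (p + i) + 3 = 2 * i + 3 + 2 * p from by ring]
    calc ∏ i ∈ range (p + (q + 1)), u (a (2 * i + 1) * a (2 * i + 2))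
        = (∏ i ∈ range p, u (a (2 * i + 1) * a (2 * i + 2))) *
            (∏ i ∈ range (q + 1), u (a (2 * i + 1 + 2 * p) * a (2 * i + 2 + 2 * p))) := by
          rw [prod_range_add, e1]
      _ = (∏ i ∈ range p, u (a (2 * i + 1) * a (2 * i + 2))) *
            (u (a (1 + 2 * p)) * (∏ i ∈ range q, u (a (2 * i + 2 + 2 * p) * a (2 * i + 3 + 2 * p)))
              * u (a (2 * q + 1 + 1 + 2 * p))) := by rw [hB]
      _ = ((∏ i ∈ range p, u (a (2 * i + 1) * a (2 * i + 2))) * u (a (2 * p + 1))) *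
            ((∏ i ∈ range q, u (a (2 * i + 2 + 2 * p) * a (2 * i + 3 + 2 * p)))
              * u (a (2 * p + (2 * q + 1) + 1))) := by
          rw [show (1 : ℕ) + 2 * p = 2 * p + 1 from by ring,
            show 2 * q + 1 + 1 + 2 * p = 2 * p + (2 * q + 1) + 1 from by ring]
          simp only [mul_assoc]
      _ = (u (a 1) * ∏ i ∈ range p, u (a (2 * i + 2) * a (2 * i + 3))) *
            ((∏ i ∈ range q, u (a (2 * i + 2 + 2 * p) * a (2 * i + 3 + 2 * p)))
              * u (a (2 * p + (2 * q + 1) + 1))) := by rw [hA a]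
      _ = u (a 1) * (∏ i ∈ range (p + q), u (a (2 * i + 2) * a (2 * i + 3))) *
            u (a (2 * p + (2 * q + 1) + 1)) := by
          rw [prod_range_add, e2]
          simp only [mul_assoc]

lemma key_oddodd {A R : Type*} [CommMonoid A] [CommMonoid R] (u : A → R) (n m : ℕ)
    (hno : Odd n) (hmo : Odd m) (hcn : SphereCond n u) (hcm : SphereCond m u) :
    SphereCond (n + m) u := by
  obtain ⟨p, rfl⟩ : ∃ p, n = 2 * p + 1 := by obtain ⟨r, hr⟩ := hno; exact ⟨r, by omega⟩
  obtain ⟨q, rfl⟩ : ∃ q, m = 2 * q + 1 := by obtain ⟨r, hr⟩ := hmo; exact ⟨r, by omega⟩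
  have hA := hcn.1 ⟨p, by ring⟩
  rw [show (2 * p + 1 + 1) / 2 = p + 1 from by omega,
    show (2 * p + 1 - 1) / 2 = p from by omega] at hA
  refine ⟨fun h => False.elim (by rw [Nat.odd_iff] at h; omega), fun _ a => ?_⟩
  have hB := hcm.1 ⟨q, by ring⟩ (fun j => a (j + (2 * p + 1)))
  rw [show (2 * q + 1 + 1) / 2 = q + 1 from by omega,
    show (2 * q + 1 - 1) / 2 = q from by omega] at hB
  rw [show (2 * p + 1 + (2 * q + 1)) / 2 = (p + 1) + q from by omega]
  have e1 : ∏ i ∈ range q, u (a (2 * (p + 1 + i) + 1) * a (2 * (p + 1 + i) + 2))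
      = ∏ i ∈ range q, u (a (2 * i + 2 + (2 * p + 1)) * a (2 * i + 3 + (2 * p + 1))) :=
    prod_congr rfl fun i _ => by
      rw [show 2 * (p + 1 + i) + 1 = 2 * i + 2 + (2 * p + 1) from by ring,
        show 2 * (p + 1 + i) + 2 = 2 * i + 3 + (2 * p + 1) from by ring]
  have e2 : ∏ i ∈ range (q + 1), u (a (2 * (p + i) + 2) * a (2 * (p + i) + 3))
      = ∏ i ∈ range (q + 1), u (a (2 * i + 1 + (2 * p + 1)) * a (2 * i + 2 + (2 * p + 1))) :=
    prod_congr rfl fun i _ => by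
      rw [show 2 * (p + i) + 2 = 2 * i + 1 + (2 * p + 1) from by ring,
        show 2 * (p + i) + 3 = 2 * i + 2 + (2 * p + 1) from by ring]
  calc (∏ i ∈ range ((p + 1) + q), u (a (2 * i + 1) * a (2 * i + 2))) *
          u (a (2 * p + 1 + (2 * q + 1) + 1))
      = (∏ i ∈ range (p + 1), u (a (2 * i + 1) * a (2 * i + 2))) *
          ((∏ i ∈ range q, u (a (2 * i + 2 + (2 * p + 1)) * a (2 * i + 3 + (2 * p + 1)))) *
            u (a (2 * q + 1 + 1 + (2 * p + 1)))) := by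
        rw [prod_range_add, e1,
          show 2 * p + 1 + (2 * q + 1) + 1 = 2 * q + 1 + 1 + (2 * p + 1) from by ring, mul_assoc]
    _ = (u (a 1) * (∏ i ∈ range p, u (a (2 * i + 2) * a (2 * i + 3))) * u (a (2 * p + 1 + 1))) *
          ((∏ i ∈ range q, u (a (2 * i + 2 + (2 * p + 1)) * a (2 * i + 3 + (2 * p + 1)))) *
            u (a (2 * q + 1 + 1 + (2 * p + 1)))) := by rw [hA a]
    _ = u (a 1) * ((∏ i ∈ range p, u (a (2 * i + 2) * a (2 * i + 3))) *
          (u (a (1 + (2 * p + 1))) *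
            (∏ i ∈ range q, u (a (2 * i + 2 + (2 * p + 1)) * a (2 * i + 3 + (2 * p + 1)))) *
            u (a (2 * q + 1 + 1 + (2 * p + 1))))) := by
        rw [show 2 * p + 1 + 1 = 1 + (2 * p + 1) from by ring]
        simp only [mul_assoc]
    _ = u (a 1) * ((∏ i ∈ range p, u (a (2 * i + 2) * a (2 * i + 3))) *
          (∏ i ∈ range (q + 1), u (a (2 * i + 1 + (2 * p + 1)) * a (2 * i + 2 + (2 * p + 1))))) := by
        rw [hB]
    _ = u (a 1) * ∏ i ∈ range ((p + 1) + q), u (a (2 * i + 2) * a (2 * i + 3)) := by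
        rw [show (p + 1) + q = p + (q + 1) from by omega]
        conv_rhs => rw [prod_range_add]
        rw [e2]


/-- If `u : A → A[[t]]` with `u(a) ≡ a mod t` satisfies the `d`-sphere product
condition for `d = n` and `d = m`, then it satisfies it for `d = n + m`. -/
theorem stmt4 {k A : Type*} [Field k] [CommRing A] [Algebra k A]
    (u : A → PowerSeries A) (hu : ∀ a : A, PowerSeries.constantCoeff (u a) = a)
    (n m : ℕ) (hn : 1 ≤ n) (hm : 1 ≤ m)
    (hcn : SphereCond n u) (hcm : SphereCond m u) :
    SphereCond (n + m) u := by
  rcases Nat.even_or_odd n with hne | hno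
  · exact key_even u n m hne hcn hcm
  · rcases Nat.even_or_odd m with hme | hmo
    · rw [add_comm]; exact key_even u m n hme hcm hcn
    · exact key_oddodd u n m hno hmo hcn hcm
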